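/- Hammersley–Chapman–Robbins bound: for any two real-valued random variables X ∼ P and Y ∼ Q with finite second moments and finite χ²-divergence χ²(P‖Q), the standard deviation of Y satisfies sqrt(Var(Y)) ≥ |E[X] − E[Y]| / sqrt(χ²(P‖Q)). -/

import Mathlib

open scoped ENNReal
open MeasureTheory ProbabilityTheory Matrix Set Bornology

/-- The `ℓ_p` norm of a finite-dimensional real vector, `p ∈ [1,∞]`. -/
noncomputable def pnorm (p : ℝ≥0∞) {ι : Type*} [Fintype ι] (x : ι → ℝ) : ℝ :=
  if p = ∞ then ⨆ i, |x i| else (∑ i, |x i| ^ p.toReal) ^ (1 / p.toReal)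

/-- `tr_p M`: the `ℓ_p` norm of the diagonal of a square matrix. -/
noncomputable def trp (p : ℝ≥0∞) {ι : Type*} [Fintype ι] (M : Matrix ι ι ℝ) : ℝ :=
  pnorm p (fun i => M i i)

/-- The closed Euclidean unit ball. -/
def ball2 (ι : Type*) [Fintype ι] : Set (ι → ℝ) := {x | ∑ i, (x i) ^ 2 ≤ 1}

/-- `Γ_p(K) = inf { sqrt(tr_{p/2}(A Aᵀ)) : ∃ v, K + v ⊆ A · B₂ }`. -/
noncomputable def Gamma (p : ℝ≥0∞) {ι : Type*} [Fintype ι] [DecidableEq ι]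
    (K : Set (ι → ℝ)) : ℝ :=
  sInf {r : ℝ | ∃ A : Matrix ι ι ℝ,
    r = Real.sqrt (trp (p / 2) (A * Aᵀ)) ∧
    ∃ v : ι → ℝ, (fun x => x + v) '' K ⊆ (fun x => A.mulVec x) '' ball2 ι}

/-- The support function `h_K(θ) = sup_{x ∈ K} ⟨x, θ⟩`. -/
noncomputable def suppFn {ι : Type*} [Fintype ι] (K : Set (ι → ℝ)) (θ : ι → ℝ) : ℝ :=
  sSup ((fun x => ∑ i, x i * θ i) '' K)

/-- The width function `w_K(θ) = sup_{x ∈ K} ⟨x, θ⟩ - inf_{x ∈ K} ⟨x, θ⟩`. -/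
noncomputable def widthFn {ι : Type*} [Fintype ι] (K : Set (ι → ℝ)) (θ : ι → ℝ) : ℝ :=
  sSup ((fun x => ∑ i, x i * θ i) '' K) - sInf ((fun x => ∑ i, x i * θ i) '' K)

/-- Hammersley–Chapman–Robbins bound: for real-valued
distributions `P`, `Q` with finite second moments and finite χ²-divergence,
`sqrt(Var_Q) ≥ |E_P[X] - E_Q[Y]| / sqrt(χ²(P‖Q))`. -/
theorem hammersley_chapman_robbins (P Q : Measure ℝ)
    [IsProbabilityMeasure P] [IsProbabilityMeasure Q] (hac : P ≪ Q)
    (hP2 : MemLp (fun x => x) 2 P) (hQ2 : MemLp (fun x => x) 2 Q)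
    (hchi : Integrable (fun y => ((P.rnDeriv Q y).toReal - 1) ^ 2) Q) :
    |(∫ x, x ∂P) - ∫ y, y ∂Q| /
        Real.sqrt (∫ y, ((P.rnDeriv Q y).toReal - 1) ^ 2 ∂Q) ≤
      Real.sqrt (ProbabilityTheory.variance (fun y => y) Q) := by
  set ρ : ℝ → ℝ := fun y => (P.rnDeriv Q y).toReal with hρ
  set μ : ℝ := ∫ y, y ∂Q with hμ
  set f : ℝ → ℝ := fun y => ρ y - 1 with hf
  set g : ℝ → ℝ := fun y => y - μ with hg
  have hρmeas : Measurable ρ := (Measure.measurable_rnDeriv P Q).ennreal_toReal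
  have hfmeas : AEStronglyMeasurable f Q :=
    ((hρmeas.sub measurable_const).aestronglyMeasurable)
  have hf2 : MemLp f 2 Q := (memLp_two_iff_integrable_sq hfmeas).mpr hchi
  have hg2 : MemLp g 2 Q := hQ2.sub (memLp_const μ)
  -- integrabilities
  have hρint : Integrable ρ Q := Measure.integrable_toReal_rnDeriv
  have hyint : Integrable (fun y : ℝ => y) Q := hQ2.integrable one_le_two
  have hxint : Integrable (fun x : ℝ => x) P := hP2.integrable one_le_two
  have hyρint : Integrable (fun y : ℝ => ρ y * y) Q := by
    have := (MeasureTheory.integrable_rnDeriv_smul_iff (E := ℝ) hac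
      (f := fun x : ℝ => x)).mpr hxint
    simpa [smul_eq_mul] using this
  -- key integral identities
  have hρ1 : ∫ y, ρ y ∂Q = 1 := by
    rw [hρ]
    simp [Measure.integral_toReal_rnDeriv hac]
  have hEP : ∫ y, ρ y * y ∂Q = ∫ x, x ∂P := by
    have := MeasureTheory.integral_rnDeriv_smul (E := ℝ) hac (f := fun x : ℝ => x)
    simpa [smul_eq_mul] using this
  have key : ∫ y, g y * f y ∂Q = (∫ x, x ∂P) - μ := by
    have hexp : ∀ y, g y * f y = (ρ y * y - μ * ρ y) - (y - μ) := by
      intro y; simp only [hg, hf]; ring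
    rw [integral_congr_ae (Filter.Eventually.of_forall hexp)]
    rw [integral_sub (f := fun y => ρ y * y - μ * ρ y) (g := fun y => y - μ)
      (hyρint.sub (hρint.const_mul μ)) (hyint.sub (integrable_const μ))]
    rw [integral_sub hyρint (hρint.const_mul μ), integral_sub hyint (integrable_const μ),
      integral_const_mul, hρ1, hEP]
    simp [hμ]
  -- Cauchy–Schwarz
  have hCS : |∫ y, g y * f y ∂Q| ≤
      Real.sqrt (∫ y, g y ^ 2 ∂Q) * Real.sqrt (∫ y, f y ^ 2 ∂Q) := by
    have h1 : |∫ y, g y * f y ∂Q| ≤ ∫ y, ‖g y‖ * ‖f y‖ ∂Q := by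
      calc |∫ y, g y * f y ∂Q| = ‖∫ y, g y * f y ∂Q‖ := (Real.norm_eq_abs _).symm
        _ ≤ ∫ y, ‖g y * f y‖ ∂Q := norm_integral_le_integral_norm _
        _ = ∫ y, ‖g y‖ * ‖f y‖ ∂Q := by simp [abs_mul]
    have hconj : Real.HolderConjugate 2 2 := by
      constructor <;> norm_num
    have h2 := integral_mul_norm_le_Lp_mul_Lq (μ := Q) hconj
      (by simpa using hg2) (by simpa using hf2)
    have hnorm : ∀ (h : ℝ → ℝ) y, ‖h y‖ ^ (2:ℝ) = h y ^ 2 := by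
      intro h y
      rw [show (2:ℝ) = ((2:ℕ):ℝ) by norm_num, Real.rpow_natCast]
      simp [sq_abs]
    calc |∫ y, g y * f y ∂Q| ≤ ∫ y, ‖g y‖ * ‖f y‖ ∂Q := h1
      _ ≤ (∫ y, ‖g y‖ ^ (2:ℝ) ∂Q) ^ (1/(2:ℝ)) * (∫ y, ‖f y‖ ^ (2:ℝ) ∂Q) ^ (1/(2:ℝ)) := h2
      _ = Real.sqrt (∫ y, g y ^ 2 ∂Q) * Real.sqrt (∫ y, f y ^ 2 ∂Q) := by
          rw [Real.sqrt_eq_rpow, Real.sqrt_eq_rpow]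
          congr 2
          · exact integral_congr_ae (Filter.Eventually.of_forall fun y => hnorm g y)
          · exact integral_congr_ae (Filter.Eventually.of_forall fun y => hnorm f y)
  have hvar : ProbabilityTheory.variance (fun y => y) Q = ∫ y, g y ^ 2 ∂Q := by
    rw [variance_eq_integral (X := fun y : ℝ => y) measurable_id'.aemeasurable]
  have habs : |(∫ x, x ∂P) - μ| ≤
      Real.sqrt (ProbabilityTheory.variance (fun y => y) Q) *
        Real.sqrt (∫ y, f y ^ 2 ∂Q) := by
    rw [hvar]; rw [← key]; exact hCS
  have hχ : (∫ y, ((P.rnDeriv Q y).toReal - 1) ^ 2 ∂Q) = ∫ y, f y ^ 2 ∂Q := rfl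
  rw [hχ]
  rcases eq_or_lt_of_le (Real.sqrt_nonneg (∫ y, f y ^ 2 ∂Q)) with h0 | hpos
  · rw [← h0, div_zero]
    exact Real.sqrt_nonneg _
  · rw [div_le_iff₀ hpos]
    exact habs
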